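/- For every formal power series f over ℤ_p with constant term 1, there exists a unique sequence (a_m)_{m≥1} of p-adic integers such that f(x) = ∏_{m=1}^∞ (1 - x^m)^{a_m} as formal power series, where (1-x^m)^a denotes the binomial series ∑_n binom(a,n)(-x^m)^n. -/

import Mathlib

open PowerSeries

/-- `binom(a, n) = a(a-1)⋯(a-n+1)/n!` computed in `ℚ_[p]`. -/
noncomputable def qbinom (p : ℕ) [Fact p.Prime] (a : ℚ_[p]) (n : ℕ) : ℚ_[p] :=
  (∏ i ∈ Finset.range n, (a - (i : ℚ_[p]))) / (n.factorial : ℚ_[p])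

/-- The binomial series `(1 - x^m)^a = ∑_k binom(a,k) (-x^m)^k` over `ℚ_[p]`. -/
noncomputable def oneSubXmPow (p : ℕ) [Fact p.Prime] (m : ℕ) (a : ℚ_[p]) :
    PowerSeries ℚ_[p] :=
  PowerSeries.mk fun n => if m ∣ n then (-1) ^ (n / m) * qbinom p a (n / m) else 0

variable {p : ℕ} [Fact p.Prime]

lemma prod_range_sub_eq_desc (a : ℤ_[p]) (n : ℕ) :
    ∏ i ∈ Finset.range n, (a - (i : ℤ_[p])) = (descPochhammer ℤ_[p] n).eval a := by
  induction n with
  | zero => simp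
  | succ n ih => rw [Finset.prod_range_succ, ih, descPochhammer_succ_eval]

lemma pnorm_prod_le (a : ℤ_[p]) (n : ℕ) :
    ‖∏ i ∈ Finset.range n, (a - (i : ℤ_[p]))‖ ≤ ‖(n.factorial : ℤ_[p])‖ := by
  rw [prod_range_sub_eq_desc, descPochhammer_eval_eq_ascPochhammer]
  exact PadicInt.norm_ascPochhammer_le n _

lemma coe_prod_sub (a : ℤ_[p]) (n : ℕ) :
    ((∏ i ∈ Finset.range n, (a - (i : ℤ_[p])) : ℤ_[p]) : ℚ_[p])
      = ∏ i ∈ Finset.range n, ((a : ℚ_[p]) - (i : ℚ_[p])) := by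
  induction n with
  | zero => simp
  | succ n ih => rw [Finset.prod_range_succ, Finset.prod_range_succ, PadicInt.coe_mul, ih,
      PadicInt.coe_sub, PadicInt.coe_natCast]

lemma norm_qbinom_le (a : ℤ_[p]) (n : ℕ) : ‖qbinom p (a : ℚ_[p]) n‖ ≤ 1 := by
  have hfac : ((n.factorial : ℚ_[p])) ≠ 0 :=
    (Nat.cast_ne_zero (R := ℚ_[p])).mpr n.factorial_ne_zero
  rw [qbinom, ← coe_prod_sub, norm_div, div_le_one (norm_pos_iff.mpr hfac)]
  calc ‖((∏ i ∈ Finset.range n, (a - (i:ℤ_[p])) : ℤ_[p]) : ℚ_[p])‖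
      ≤ ‖((n.factorial : ℤ_[p]) : ℚ_[p])‖ := by
        rw [← PadicInt.norm_def, ← PadicInt.norm_def]; exact pnorm_prod_le a n
    _ = ‖(n.factorial : ℚ_[p])‖ := by rw [PadicInt.coe_natCast]

noncomputable def zbinom (a : ℤ_[p]) (n : ℕ) : ℤ_[p] :=
  ⟨qbinom p (a : ℚ_[p]) n, norm_qbinom_le a n⟩

@[simp] lemma zbinom_coe (a : ℤ_[p]) (n : ℕ) : ((zbinom a n : ℤ_[p]) : ℚ_[p]) = qbinom p (a : ℚ_[p]) n := rfl

@[simp] lemma zbinom_zero (a : ℤ_[p]) : zbinom a 0 = 1 := by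
  apply Subtype.ext; simp [zbinom, qbinom]

@[simp] lemma zbinom_one (a : ℤ_[p]) : zbinom a 1 = a := by
  apply Subtype.ext; simp [zbinom, qbinom]

noncomputable def Gz (m : ℕ) (a : ℤ_[p]) : PowerSeries ℤ_[p] :=
  PowerSeries.mk fun n => if m ∣ n then (-1) ^ (n / m) * zbinom a (n / m) else 0

lemma map_Gz (m : ℕ) (a : ℤ_[p]) :
    PowerSeries.map (PadicInt.Coe.ringHom (p := p)) (Gz m a) = oneSubXmPow p m (a : ℚ_[p]) := by
  ext n
  rw [PowerSeries.coeff_map, Gz, oneSubXmPow, PowerSeries.coeff_mk, PowerSeries.coeff_mk]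
  split
  · rw [map_mul, map_pow, map_neg, map_one]; rfl
  · simp

@[simp] lemma coeff_Gz_zero (m : ℕ) (a : ℤ_[p]) : coeff 0 (Gz m a) = 1 := by
  simp [Gz]

@[simp] lemma constantCoeff_Gz (m : ℕ) (a : ℤ_[p]) : constantCoeff (Gz m a) = 1 := by
  rw [← coeff_zero_eq_constantCoeff]; simp

lemma coeff_Gz_not_dvd {m n : ℕ} (h : ¬ m ∣ n) (a : ℤ_[p]) : coeff n (Gz m a) = 0 := by
  simp [Gz, h]

lemma coeff_Gz_self {m : ℕ} (hm : 1 ≤ m) (a : ℤ_[p]) : coeff m (Gz m a) = -a := by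
  simp [Gz, Nat.div_self hm]

lemma coeff_mul_Gz_of_lt {N k : ℕ} (h : N < k) (P : PowerSeries ℤ_[p]) (a : ℤ_[p]) :
    coeff N (P * Gz k a) = coeff N P := by
  rw [PowerSeries.coeff_mul]
  rw [Finset.sum_eq_single (N, 0)]
  · simp
  · rintro ⟨i, j⟩ hij hne
    rw [Finset.HasAntidiagonal.mem_antidiagonal] at hij
    have hj : j ≠ 0 := by rintro rfl; exact hne (by simp [← hij])
    have : ¬ k ∣ j := Nat.not_dvd_of_pos_of_lt (Nat.pos_of_ne_zero hj)
      (lt_of_le_of_lt (by omega) h)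
    rw [coeff_Gz_not_dvd this, mul_zero]
  · intro hmem
    exact absurd (Finset.HasAntidiagonal.mem_antidiagonal.mpr (by simp)) hmem

lemma coeff_mul_Gz_self {k : ℕ} (hk : 1 ≤ k) (P : PowerSeries ℤ_[p])
    (hP : constantCoeff P = 1) (a : ℤ_[p]) :
    coeff k (P * Gz k a) = coeff k P - a := by
  rw [PowerSeries.coeff_mul]
  have h1 : ((k, 0) : ℕ × ℕ) ∈ Finset.HasAntidiagonal.antidiagonal k := by simp
  have h2 : ((0, k) : ℕ × ℕ) ∈ (Finset.HasAntidiagonal.antidiagonal k).erase (k, 0) := by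
    rw [Finset.mem_erase]
    exact ⟨by simp [Prod.ext_iff]; omega, by simp⟩
  rw [← Finset.add_sum_erase _ _ h1, ← Finset.add_sum_erase _ _ h2]
  have hz : ∑ x ∈ ((Finset.HasAntidiagonal.antidiagonal k).erase (k, 0)).erase (0, k),
      coeff x.1 P * coeff x.2 (Gz k a) = 0 := by
    apply Finset.sum_eq_zero
    rintro ⟨i, j⟩ hx
    rw [Finset.mem_erase, Finset.mem_erase, Finset.HasAntidiagonal.mem_antidiagonal] at hx
    obtain ⟨hne2, hne1, hij⟩ := hx
    have hj0 : j ≠ 0 := by rintro rfl; exact hne1 (by simp [Prod.ext_iff]; omega)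
    have hjk : j ≠ k := by rintro rfl; exact hne2 (by simp [Prod.ext_iff]; omega)
    have : ¬ k ∣ j := Nat.not_dvd_of_pos_of_lt (Nat.pos_of_ne_zero hj0) (by omega)
    rw [coeff_Gz_not_dvd this, mul_zero]
  rw [hz, coeff_Gz_self hk, coeff_Gz_zero, coeff_zero_eq_constantCoeff, hP]
  ring

noncomputable def Pz (a : ℕ → ℤ_[p]) (N : ℕ) : PowerSeries ℤ_[p] :=
  ∏ m ∈ Finset.Icc 1 N, Gz m (a m)

@[simp] lemma Pz_zero (a : ℕ → ℤ_[p]) : Pz a 0 = 1 := by simp [Pz]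

lemma Pz_succ (a : ℕ → ℤ_[p]) (N : ℕ) : Pz a (N + 1) = Pz a N * Gz (N + 1) (a (N + 1)) := by
  rw [Pz, Pz, Finset.prod_Icc_succ_top (by omega)]

lemma constantCoeff_Pz (a : ℕ → ℤ_[p]) (N : ℕ) : constantCoeff (Pz a N) = 1 := by
  rw [Pz, map_prod]
  exact Finset.prod_eq_one fun m _ => constantCoeff_Gz m (a m)

lemma coeff_Pz_succ (a : ℕ → ℤ_[p]) (N : ℕ) :
    coeff (N + 1) (Pz a (N + 1)) = coeff (N + 1) (Pz a N) - a (N + 1) := by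
  rw [Pz_succ]
  exact coeff_mul_Gz_self (by omega) _ (constantCoeff_Pz a N) _

lemma Pz_congr {a b : ℕ → ℤ_[p]} {N : ℕ} (h : ∀ m, 1 ≤ m → m ≤ N → a m = b m) :
    Pz a N = Pz b N := by
  apply Finset.prod_congr rfl
  intro m hm
  rw [Finset.mem_Icc] at hm
  rw [h m hm.1 hm.2]

/-- The recursively defined exponent and partial product. -/
noncomputable def pAux (f : PowerSeries ℤ_[p]) : ℕ → ℤ_[p] × PowerSeries ℤ_[p]
  | 0 => (0, 1)
  | (N + 1) =>
      let P := (pAux f N).2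
      let c := coeff (N + 1) P - coeff (N + 1) f
      (c, P * Gz (N + 1) c)

noncomputable def pSeq (f : PowerSeries ℤ_[p]) (N : ℕ) : ℤ_[p] := (pAux f N).1

lemma pAux_snd (f : PowerSeries ℤ_[p]) (N : ℕ) : (pAux f N).2 = Pz (pSeq f) N := by
  induction N with
  | zero => simp [pAux]
  | succ N ih => rw [pAux, Pz_succ, ← ih]; rfl

lemma pSeq_succ (f : PowerSeries ℤ_[p]) (N : ℕ) :
    pSeq f (N + 1) = coeff (N + 1) (Pz (pSeq f) N) - coeff (N + 1) f := by
  rw [pSeq, pAux, ← pAux_snd]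

lemma pSeq_spec (f : PowerSeries ℤ_[p]) (hf : constantCoeff f = 1) (N : ℕ) :
    coeff N f = coeff N (Pz (pSeq f) N) := by
  cases N with
  | zero => rw [coeff_zero_eq_constantCoeff, hf]; simp
  | succ N => rw [coeff_Pz_succ, pSeq_succ]; ring

lemma pSeq_unique (f : PowerSeries ℤ_[p]) (b : ℕ → ℤ_[p]) (hb0 : b 0 = 0)
    (hb : ∀ N, coeff N f = coeff N (Pz b N)) : b = pSeq f := by
  funext N
  induction N using Nat.strong_induction_on with
  | _ N ih =>
    cases N with
    | zero => rw [hb0]; rfl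
    | succ N =>
      have h1 := hb (N + 1)
      rw [coeff_Pz_succ] at h1
      have h2 : Pz b N = Pz (pSeq f) N := Pz_congr fun m h1m hmN => ih m (by omega)
      rw [pSeq_succ, ← h2]
      linear_combination h1

lemma coeff_prod_oneSubXmPow (a : ℕ → ℤ_[p]) (N : ℕ) :
    coeff N (∏ m ∈ Finset.Icc 1 N, oneSubXmPow p m ((a m : ℚ_[p])))
      = ((coeff N (Pz a N) : ℤ_[p]) : ℚ_[p]) := by
  have h : (∏ m ∈ Finset.Icc 1 N, oneSubXmPow p m ((a m : ℚ_[p])))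
      = PowerSeries.map (PadicInt.Coe.ringHom (p := p)) (Pz a N) := by
    rw [Pz, map_prod]
    exact Finset.prod_congr rfl fun m _ => (map_Gz m (a m)).symm
  rw [h, PowerSeries.coeff_map]
  rfl

/-- Every `f ∈ ℤ_p[[x]]` with constant term `1` is uniquely an infinite product
`∏_{m ≥ 1} (1 - x^m)^{a_m}` with `a_m ∈ ℤ_p`; convergence of the infinite product is expressed
by saying that the `N`-th coefficient of `f` agrees with that of the finite partial product over
`1 ≤ m ≤ N` (the remaining factors are `≡ 1 mod x^{N+1}`). -/
theorem stmt_0 (p : ℕ) [Fact p.Prime] (f : PowerSeries ℤ_[p])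
    (hf : constantCoeff f = 1) :
    ∃! a : ℕ → ℤ_[p], a 0 = 0 ∧
      ∀ N : ℕ, ((coeff N f : ℤ_[p]) : ℚ_[p]) =
        coeff N (∏ m ∈ Finset.Icc 1 N, oneSubXmPow p m ((a m : ℚ_[p]))) := by
  have key : ∀ a : ℕ → ℤ_[p], ∀ N : ℕ,
      (((coeff N f : ℤ_[p]) : ℚ_[p]) =
        coeff N (∏ m ∈ Finset.Icc 1 N, oneSubXmPow p m ((a m : ℚ_[p]))))
        ↔ coeff N f = coeff N (Pz a N) := by
    intro a N
    rw [coeff_prod_oneSubXmPow]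
    exact ⟨fun h => Subtype.coe_injective h, fun h => by rw [h]⟩
  refine ⟨pSeq f, ⟨rfl, fun N => (key (pSeq f) N).mpr (pSeq_spec f hf N)⟩, ?_⟩
  rintro b ⟨hb0, hb⟩
  exact pSeq_unique f b hb0 fun N => (key b N).mp (hb N)
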